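/- arXiv:math/0609119 — 2 statements merged into one kernel-verified Lean document; each statement's English description precedes it below -/
import Mathlib

section
/- Let n ≥ k ≥ 2, let 𝔽 be a field, let S_k ⊆ C([n],k), and let V be a (k−1)-subset of [n] that is not a facet of ⟨S_k⟩. Then V is simplicial in ⟨S_k⟩ if and only if the set X = ∪_{F ∈ supp(δ^{k−1}V)} F is the unique facet of ⟨S_k⟩ containing V. -/
/-!
Common definitions for simplicial matroids, following Cordovil–Lemos–Linhares Sales,
"Dirac's theorem on simplicial matroids".

We model `[n] = {1,…,n}` by `Fin n`, and a subset of `[n]` by a `Finset (Fin n)`.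
A family `S_k ⊆ C([n],k)` is a `Finset (Finset (Fin n))` (all of whose members
have cardinality `k`, which is imposed by hypotheses in the theorems).
-/

open Finset

/-- The incidence number `[F' : F]`: if `F = i₁ < i₂ < ⋯ < iₘ` and `F' = F \ {iⱼ}`
then `[F' : F] = (-1)ʲ` (with `j` the 1-based position of the deleted element),
and `[F' : F] = 0` otherwise. -/
def inc {n : ℕ} (F' F : Finset (Fin n)) : ℤ :=
  ∑ i ∈ F, if F' = F.erase i then (-1 : ℤ) ^ (F.filter (fun j => j ≤ i)).card else 0

/-- The family `C([n], m)` of `m`-element subsets of `[n]`, as a type. -/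
abbrev Csets (n m : ℕ) := {F : Finset (Fin n) // F.card = m}

/-- `∂_k F`, the boundary of a single `k`-subset `F` of `[n]`,
as a vector of `𝔽^{C([n],k-1)}`. -/
def bvec (𝔽 : Type*) [Field 𝔽] (n k : ℕ) (F : Finset (Fin n)) : Csets n (k - 1) → 𝔽 :=
  fun F' => ((inc F'.1 F : ℤ) : 𝔽)

/-- Independence in the simplicial matroid `Sim_k^n(S_k)` over `𝔽`:
`X ⊆ S_k` is independent iff the vectors `∂_k F`, `F ∈ X`, are linearly independent. -/
def SimIndep (𝔽 : Type*) [Field 𝔽] (n k : ℕ) (Sk X : Finset (Finset (Fin n))) : Prop :=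
  X ⊆ Sk ∧ LinearIndependent 𝔽 (fun F : X => bvec 𝔽 n k F.1)

/-- A circuit of `Sim_k^n(S_k)`: a minimal dependent subset of the ground set. -/
def SimCircuit (𝔽 : Type*) [Field 𝔽] (n k : ℕ) (Sk C : Finset (Finset (Fin n))) : Prop :=
  C ⊆ Sk ∧ ¬ LinearIndependent 𝔽 (fun F : C => bvec 𝔽 n k F.1) ∧
    ∀ C' ⊂ C, LinearIndependent 𝔽 (fun F : C' => bvec 𝔽 n k F.1)

/-- The rank (in `Sim_k^n`) of a set `X` of `k`-subsets of `[n]`: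
the dimension of the span of the boundaries of its members. -/
noncomputable def simRank (𝔽 : Type*) [Field 𝔽] (n k : ℕ) (X : Finset (Finset (Fin n))) : ℕ :=
  Module.finrank 𝔽 (Submodule.span 𝔽 ((fun F => bvec 𝔽 n k F) '' (X : Set (Finset (Fin n)))))

/-- A cocircuit of `Sim_k^n(S_k)`, i.e. a circuit of the dual matroid:
a minimal set `C ⊆ S_k` whose complement does not span (`X` is independent in the dual
matroid iff `r(E ∖ X) = r(E)`). -/
def SimCocircuit (𝔽 : Type*) [Field 𝔽] (n k : ℕ) (Sk C : Finset (Finset (Fin n))) : Prop :=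
  C ⊆ Sk ∧ simRank 𝔽 n k (Sk \ C) < simRank 𝔽 n k Sk ∧
    ∀ C' ⊂ C, simRank 𝔽 n k (Sk \ C') = simRank 𝔽 n k Sk

/-- The boundary map `∂_k : 𝔽^{S_k} → 𝔽^{C([n],k-1)}`. -/
noncomputable def bdryMap (𝔽 : Type*) [Field 𝔽] (n k : ℕ) (Sk : Finset (Finset (Fin n))) :
    (↥Sk → 𝔽) →ₗ[𝔽] (Csets n (k - 1) → 𝔽) :=
  Matrix.mulVecLin (Matrix.of fun (F' : Csets n (k - 1)) (F : ↥Sk) => ((inc F'.1 F.1 : ℤ) : 𝔽))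

/-- The coboundary `δ^{k-1} V` of a `(k-1)`-subset `V` of `[n]`,
as a vector of `𝔽^{S_k}`; its `F`-coordinate is `[V : F]`. -/
def cobdry (𝔽 : Type*) [Field 𝔽] {n : ℕ} (Sk : Finset (Finset (Fin n)))
    (V : Finset (Fin n)) : ↥Sk → 𝔽 :=
  fun F => ((inc V F.1 : ℤ) : 𝔽)

/-- The boundary `∂_{k+1} X` of a `(k+1)`-subset `X` of `[n]`, regarded as a vector
of `𝔽^{S_k}`; its `F`-coordinate is `[F : X]`. -/
def pbdry (𝔽 : Type*) [Field 𝔽] {n : ℕ} (Sk : Finset (Finset (Fin n)))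
    (X : Finset (Fin n)) : ↥Sk → 𝔽 :=
  fun F => ((inc F.1 X : ℤ) : 𝔽)

open scoped Classical in
/-- The support of a vector of `𝔽^{S_k}`, as a set of `k`-subsets of `[n]`. -/
noncomputable def suppFin {𝔽 : Type*} [Field 𝔽] {n : ℕ} {Sk : Finset (Finset (Fin n))}
    (v : ↥Sk → 𝔽) : Finset (Finset (Fin n)) :=
  (Sk.attach.filter fun F => v F ≠ 0).image Subtype.val

/-- `supp(δ^{k-1} V) ⊆ S_k`. -/
noncomputable def suppδ (𝔽 : Type*) [Field 𝔽] {n : ℕ} (Sk : Finset (Finset (Fin n)))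
    (V : Finset (Fin n)) : Finset (Finset (Fin n)) :=
  suppFin (cobdry 𝔽 Sk V)

/-- The cocircuit space of `Sim_k^n(S_k)`: the orthogonal complement, with respect to the
standard bilinear form on `𝔽^{S_k}`, of the circuit space `ker ∂_k`. -/
noncomputable def cocircSpace (𝔽 : Type*) [Field 𝔽] (n k : ℕ) (Sk : Finset (Finset (Fin n))) :
    Submodule 𝔽 (↥Sk → 𝔽) where
  carrier := {w | ∀ v ∈ LinearMap.ker (bdryMap 𝔽 n k Sk), ∑ F, v F * w F = 0}
  zero_mem' := by intro v hv; simp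
  add_mem' := by
    intro a b ha hb v hv
    have h1 := ha v hv
    have h2 := hb v hv
    simp only [Pi.add_apply, mul_add, Finset.sum_add_distrib]
    rw [h1, h2, add_zero]
  smul_mem' := by
    intro c w hw v hv
    have h := hw v hv
    simp only [Pi.smul_apply, smul_eq_mul]
    calc ∑ F, v F * (c * w F) = ∑ F, c * (v F * w F) := by
          exact Finset.sum_congr rfl fun F _ => by ring
      _ = c * ∑ F, v F * w F := (Finset.mul_sum _ _ _).symm
      _ = 0 := by rw [h, mul_zero]

/-- The faces of the `k`-hyperclique complex `⟨S_k⟩`: all `F ⊆ [n]` with `|F| < k`,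
together with all `F` every `k`-element subset of which lies in `S_k`. -/
def IsFace {n : ℕ} (k : ℕ) (Sk : Finset (Finset (Fin n))) (F : Finset (Fin n)) : Prop :=
  F.card < k ∨ ∀ G ⊆ F, G.card = k → G ∈ Sk

/-- A facet of `⟨S_k⟩`: an inclusion-maximal face. -/
def IsFacet {n : ℕ} (k : ℕ) (Sk : Finset (Finset (Fin n))) (F : Finset (Fin n)) : Prop :=
  IsFace k Sk F ∧ ∀ G, IsFace k Sk G → F ⊆ G → F = G

/-- `V` is simplicial in `⟨S_k⟩` if there is exactly one facet `X` of `⟨S_k⟩`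
with `V ⊊ X`. -/
def SimplicialFace {n : ℕ} (k : ℕ) (Sk : Finset (Finset (Fin n))) (V : Finset (Fin n)) : Prop :=
  ∃! X, IsFacet k Sk X ∧ V ⊂ X

/-- The `k`-skeleta of the complexes `Δ_0 = ⟨S_k⟩`, `Δ_{j+1} = Δ_j ∖∖ V_j`, where
`Δ ∖∖ V = ⟨(skeleton of Δ) ∖ supp(δ^{k-1} V)⟩` (0-indexed). -/
noncomputable def delSeq (𝔽 : Type*) [Field 𝔽] {n : ℕ} (Sk : Finset (Finset (Fin n)))
    (V : ℕ → Finset (Fin n)) : ℕ → Finset (Finset (Fin n))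
  | 0 => Sk
  | j + 1 => delSeq 𝔽 Sk V j \ suppδ 𝔽 (delSeq 𝔽 Sk V j) (V j)

/-- `C*_j := supp(δ^{k-1} V_j) ∖ ⋃_{i<j} supp(δ^{k-1} V_i)` (0-indexed). -/
noncomputable def Cstar (𝔽 : Type*) [Field 𝔽] {n : ℕ} (Sk : Finset (Finset (Fin n)))
    (V : ℕ → Finset (Fin n)) (j : ℕ) : Finset (Finset (Fin n)) :=
  suppδ 𝔽 Sk (V j) \ (Finset.range j).biUnion (fun i => suppδ 𝔽 Sk (V i))

/-- `(V_1,…,V_r)` (0-indexed: `V 0, …, V (r-1)`) is a basic linear sequence for `⟨S_k⟩`,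
where `r` is the rank of `Sim_k^n(S_k)`: each `V_j` is a `(k-1)`-subset of `[n]` and each
`C*_j` is a cocircuit of `Sim_k^n(S_k(Δ_{j-1}))`. -/
def BasicLinearSeq (𝔽 : Type*) [Field 𝔽] (n k : ℕ) (Sk : Finset (Finset (Fin n))) (r : ℕ)
    (V : ℕ → Finset (Fin n)) : Prop :=
  simRank 𝔽 n k Sk = r ∧ (∀ j < r, (V j).card = k - 1) ∧
    ∀ j < r, SimCocircuit 𝔽 n k (delSeq 𝔽 Sk V j) (Cstar 𝔽 Sk V j)

/-- `⟨S_k⟩` is D-perfect: there is a basic linear sequence `V_1,…,V_r` such that each `V_j`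
is simplicial in `Δ_{j-1}`. -/
def DPerfect (𝔽 : Type*) [Field 𝔽] (n k : ℕ) (Sk : Finset (Finset (Fin n))) : Prop :=
  ∃ V : ℕ → Finset (Fin n),
    BasicLinearSeq 𝔽 n k Sk (simRank 𝔽 n k Sk) V ∧
      ∀ j < simRank 𝔽 n k Sk, SimplicialFace k (delSeq 𝔽 Sk V j) (V j)

/-- A flat of `Sim_k^n(S_k)`: a closed subset of the ground set. -/
def SimFlat (𝔽 : Type*) [Field 𝔽] (n k : ℕ) (Sk X : Finset (Finset (Fin n))) : Prop :=
  X ⊆ Sk ∧ ∀ F ∈ Sk,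
    bvec 𝔽 n k F ∈ Submodule.span 𝔽 ((fun G => bvec 𝔽 n k G) '' (X : Set (Finset (Fin n)))) →
      F ∈ X

/-- A hyperplane of `Sim_k^n(S_k)`: a flat of rank one less than the rank of the matroid. -/
def SimHyperplane (𝔽 : Type*) [Field 𝔽] (n k : ℕ) (Sk H : Finset (Finset (Fin n))) : Prop :=
  SimFlat 𝔽 n k Sk H ∧ simRank 𝔽 n k H + 1 = simRank 𝔽 n k Sk

/-- A modular flat of `Sim_k^n(S_k)`:
`r(X) + r(Y) = r(X ∪ Y) + r(X ∩ Y)` for every flat `Y`. -/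
def ModularFlat (𝔽 : Type*) [Field 𝔽] (n k : ℕ) (Sk X : Finset (Finset (Fin n))) : Prop :=
  SimFlat 𝔽 n k Sk X ∧ ∀ Y, SimFlat 𝔽 n k Sk Y →
    simRank 𝔽 n k X + simRank 𝔽 n k Y = simRank 𝔽 n k (X ∪ Y) + simRank 𝔽 n k (X ∩ Y)

open scoped Classical in
/-- The closure of `X` in `Sim_k^n(S_k)`. -/
noncomputable def simClosure (𝔽 : Type*) [Field 𝔽] (n k : ℕ)
    (Sk X : Finset (Finset (Fin n))) : Finset (Finset (Fin n)) :=
  Sk.filter fun F =>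
    bvec 𝔽 n k F ∈ Submodule.span 𝔽 ((fun G => bvec 𝔽 n k G) '' (X : Set (Finset (Fin n))))

/-- `Sim_k^n(S_k)` is supersolvable: it admits a maximal chain of modular flats
`cl(∅) = X_0 ⊊ X_1 ⊊ ⋯ ⊊ X_r = S_k`, `r` the rank. -/
def Supersolvable (𝔽 : Type*) [Field 𝔽] (n k : ℕ) (Sk : Finset (Finset (Fin n))) : Prop :=
  ∃ X : ℕ → Finset (Finset (Fin n)),
    X 0 = simClosure 𝔽 n k Sk ∅ ∧ X (simRank 𝔽 n k Sk) = Sk ∧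
      (∀ i < simRank 𝔽 n k Sk, X i ⊂ X (i + 1)) ∧
      ∀ i ≤ simRank 𝔽 n k Sk, ModularFlat 𝔽 n k Sk (X i)

/-- `H` is a dense hyperplane of `Sim_k^n(ground)`: a hyperplane of the form
`ground ∖ supp(δ^{k-1} V)` for some `(k-1)`-subset `V` simplicial in `⟨ground⟩`. -/
def DenseHyp (𝔽 : Type*) [Field 𝔽] (n k : ℕ) (ground H : Finset (Finset (Fin n))) : Prop :=
  SimHyperplane 𝔽 n k ground H ∧
    ∃ V : Finset (Fin n), V.card = k - 1 ∧ SimplicialFace k ground V ∧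
      H = ground \ suppδ 𝔽 ground V

/-- `Sim_k^n(S_k)` is superdense: there is a chain `∅ = X_0 ⊊ X_1 ⊊ ⋯ ⊊ X_r = S_k` of flats
(`r` the rank) with each `X_i` a dense hyperplane of `Sim_k^n(X_{i+1})`. -/
def Superdense (𝔽 : Type*) [Field 𝔽] (n k : ℕ) (Sk : Finset (Finset (Fin n))) : Prop :=
  ∃ X : ℕ → Finset (Finset (Fin n)),
    X 0 = ∅ ∧ X (simRank 𝔽 n k Sk) = Sk ∧
      (∀ i ≤ simRank 𝔽 n k Sk, SimFlat 𝔽 n k Sk (X i)) ∧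
      (∀ i < simRank 𝔽 n k Sk, X i ⊂ X (i + 1)) ∧
      ∀ i < simRank 𝔽 n k Sk, DenseHyp 𝔽 n k (X (i + 1)) (X i)

/-- `Sim_k^n(S_k)` is triangulable over `𝔽`: the boundaries of the `(k+1)`-faces of `⟨S_k⟩`
span the circuit space `ker ∂_k`. -/
def Triangulable (𝔽 : Type*) [Field 𝔽] (n k : ℕ) (Sk : Finset (Finset (Fin n))) : Prop :=
  Submodule.span 𝔽
      {v : ↥Sk → 𝔽 | ∃ X : Finset (Fin n), X.card = k + 1 ∧ IsFace k Sk X ∧ v = pbdry 𝔽 Sk X}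
    = LinearMap.ker (bdryMap 𝔽 n k Sk)

/-- `Sim_k^n(S_k)` is strongly triangulable over `𝔽`: there are `(k+1)`-faces `X_1,…,X_{m'}`
of `⟨S_k⟩` whose boundaries span `ker ∂_k` and such that every circuit `C` has a
representing vector `C⃗` with support `C` which is a combination, with nonzero coefficients,
of boundaries `∂_{k+1} X_{i_j}` with `⋃_{F ∈ C} F = ⋃_j X_{i_j}`. -/
def StronglyTriangulable (𝔽 : Type*) [Field 𝔽] (n k : ℕ)
    (Sk : Finset (Finset (Fin n))) : Prop :=
  ∃ (m' : ℕ) (Xs : Fin m' → Finset (Fin n)),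
    (∀ i, (Xs i).card = k + 1 ∧ IsFace k Sk (Xs i)) ∧
    Submodule.span 𝔽 (Set.range fun i => pbdry 𝔽 Sk (Xs i)) = LinearMap.ker (bdryMap 𝔽 n k Sk) ∧
    ∀ C, SimCircuit 𝔽 n k Sk C →
      ∃ (s : ℕ) (idx : Fin s → Fin m') (a : Fin s → 𝔽) (Cv : ↥Sk → 𝔽),
        (∀ j, a j ≠ 0) ∧ suppFin Cv = C ∧
        Cv = ∑ j, a j • pbdry 𝔽 Sk (Xs (idx j)) ∧
        C.biUnion id = Finset.univ.biUnion fun j : Fin s => Xs (idx j)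

/-- The simple graph `([n], S_2)`. -/
def graphOf {n : ℕ} (S2 : Finset (Finset (Fin n))) : SimpleGraph (Fin n) where
  Adj u v := u ≠ v ∧ ({u, v} : Finset (Fin n)) ∈ S2
  symm := by
    constructor
    intro u v h
    exact ⟨h.1.symm, by rw [Finset.pair_comm]; exact h.2⟩
  loopless := by constructor; intro u h; exact h.1 rfl

/-- A simple graph is chordal if every cycle of length at least four has a chord, i.e. an
edge of the graph joining two non-consecutive vertices of the cycle. -/
def Chordal {α : Type*} (G : SimpleGraph α) : Prop :=
  ∀ (v : α) (w : G.Walk v v), w.IsCycle → 4 ≤ w.length →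
    ∃ u₁ u₂, u₁ ∈ w.support ∧ u₂ ∈ w.support ∧ G.Adj u₁ u₂ ∧ s(u₁, u₂) ∉ w.edges


section Aux
variable {n : ℕ} {𝔽 : Type*} [Field 𝔽]

lemma inc_eq_zero_of_not_subset {V F : Finset (Fin n)} (h : ¬ V ⊆ F) : inc V F = 0 := by
  unfold inc
  refine Finset.sum_eq_zero fun i hi => ?_
  rw [if_neg]
  rintro rfl
  exact h (Finset.erase_subset i F)

lemma inc_cast_ne_zero {V F : Finset (Fin n)} (hc : V.card + 1 = F.card) (h : V ⊂ F) :
    ((inc V F : ℤ) : 𝔽) ≠ 0 := by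
  obtain ⟨i₀, hi₀F, hi₀V⟩ := Finset.exists_of_ssubset h
  have hVe : V = F.erase i₀ := by
    apply Finset.eq_of_subset_of_card_le
    · exact Finset.subset_erase.2 ⟨h.1, hi₀V⟩
    · rw [Finset.card_erase_of_mem hi₀F]; omega
  have hval : inc V F = (-1 : ℤ) ^ (F.filter (fun j => j ≤ i₀)).card := by
    unfold inc
    rw [Finset.sum_eq_single i₀]
    · rw [if_pos hVe]
    · intro i hi hne
      rw [if_neg]
      intro hEq
      have : i₀ ∈ V := by
        rw [hEq]; exact Finset.mem_erase.2 ⟨fun h' => hne h'.symm, hi₀F⟩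
      exact hi₀V this
    · intro hi; exact absurd hi₀F hi
  rw [hval]
  push_cast
  exact pow_ne_zero _ (by norm_num)

lemma mem_suppδ {k : ℕ} {Sk : Finset (Finset (Fin n))} (hSk : ∀ F ∈ Sk, F.card = k)
    {V : Finset (Fin n)} (hV : V.card + 1 = k) {F : Finset (Fin n)} :
    F ∈ suppδ 𝔽 Sk V ↔ F ∈ Sk ∧ V ⊂ F := by
  unfold suppδ suppFin
  simp only [Finset.mem_image, Finset.mem_filter, Finset.mem_attach, true_and, Subtype.exists,
    exists_and_right, exists_eq_right]
  constructor
  · rintro ⟨hG, hne⟩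
    refine ⟨hG, ?_⟩
    by_contra hss
    have hsub : ¬ V ⊆ F := by
      intro hs
      refine hss (lt_of_le_of_ne hs ?_)
      rintro rfl
      have := hSk V hG
      omega
    exact hne (by simp [cobdry, inc_eq_zero_of_not_subset hsub])
  · rintro ⟨hF, hss⟩
    refine ⟨hF, ?_⟩
    have hc : V.card + 1 = F.card := by rw [hSk F hF]; exact hV
    simpa [cobdry] using inc_cast_ne_zero (𝔽 := 𝔽) hc hss

lemma exists_facet {k : ℕ} {Sk : Finset (Finset (Fin n))} {F : Finset (Fin n)}
    (hF : IsFace k Sk F) : ∃ X, IsFacet k Sk X ∧ F ⊆ X := by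
  classical
  set T := Finset.univ.powerset.filter (fun G => IsFace k Sk G ∧ F ⊆ G) with hT
  have hFT : F ∈ T := by simp [hT, hF]
  obtain ⟨M, hM, hmax⟩ := T.exists_max_image Finset.card ⟨F, hFT⟩
  simp only [hT, Finset.mem_filter] at hM
  refine ⟨M, ⟨hM.2.1, ?_⟩, hM.2.2⟩
  intro G hG hMG
  have hGT : G ∈ T := by simp [hT, hG, hM.2.2.trans hMG]
  exact Finset.eq_of_subset_of_card_le hMG (hmax G hGT)

end Aux

theorem stmt7 (𝔽 : Type*) [Field 𝔽] (n k : ℕ) (hk : 2 ≤ k) (hkn : k ≤ n)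
    (Sk : Finset (Finset (Fin n))) (hSk : ∀ F ∈ Sk, F.card = k)
    (V : Finset (Fin n)) (hV : V.card = k - 1) (hnf : ¬ IsFacet k Sk V) :
    SimplicialFace k Sk V ↔
      (IsFacet k Sk ((suppδ 𝔽 Sk V).biUnion id) ∧ V ⊂ (suppδ 𝔽 Sk V).biUnion id ∧
        ∀ Y, IsFacet k Sk Y → V ⊂ Y → Y = (suppδ 𝔽 Sk V).biUnion id) := by
  classical
  have hV1 : V.card + 1 = k := by omega
  have hmem : ∀ {F : Finset (Fin n)}, F ∈ suppδ 𝔽 Sk V ↔ F ∈ Sk ∧ V ⊂ F :=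
    fun {F} => mem_suppδ hSk hV1
  constructor
  · rintro ⟨X, ⟨hXf, hVX⟩, hun⟩
    have hXcard : k ≤ X.card := by have := Finset.card_lt_card hVX; omega
    have hXall : ∀ G ⊆ X, G.card = k → G ∈ Sk := by
      rcases hXf.1 with h | h
      · exact absurd h (by omega)
      · exact h
    have hEq : (suppδ 𝔽 Sk V).biUnion id = X := by
      apply Finset.Subset.antisymm
      · intro x hx
        simp only [Finset.mem_biUnion, id] at hx
        obtain ⟨F, hF, hxF⟩ := hx
        rw [hmem] at hF
        have hFface : IsFace k Sk F := by
          right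
          intro G hGF hGk
          have hGF' : G = F := Finset.eq_of_subset_of_card_le hGF (by rw [hSk F hF.1, hGk])
          rw [hGF']; exact hF.1
        obtain ⟨Y, hYf, hFY⟩ := exists_facet hFface
        have hYX : Y = X := hun Y ⟨hYf, Finset.ssubset_of_ssubset_of_subset hF.2 hFY⟩
        exact hYX ▸ hFY hxF
      · intro x hx
        obtain ⟨y, hyX, hyV⟩ := Finset.exists_of_ssubset hVX
        by_cases hxV : x ∈ V
        · have hF : insert y V ∈ Sk := hXall _ (Finset.insert_subset hyX hVX.1)
            (by rw [Finset.card_insert_of_notMem hyV]; omega)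
          exact Finset.mem_biUnion.2 ⟨insert y V, hmem.2 ⟨hF, Finset.ssubset_insert hyV⟩,
            Finset.mem_insert_of_mem hxV⟩
        · have hF : insert x V ∈ Sk := hXall _ (Finset.insert_subset hx hVX.1)
            (by rw [Finset.card_insert_of_notMem hxV]; omega)
          exact Finset.mem_biUnion.2 ⟨insert x V, hmem.2 ⟨hF, Finset.ssubset_insert hxV⟩,
            Finset.mem_insert_self x V⟩
    rw [hEq]
    exact ⟨hXf, hVX, fun Y hY hVY => hun Y ⟨hY, hVY⟩⟩
  · rintro ⟨h1, h2, h3⟩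
    exact ⟨_, ⟨h1, h2⟩, fun Y hY => h3 Y hY.1 hY.2⟩
end

section
/- Let n ≥ k > 2, let 𝔽 be a field and let S_k ⊆ C([n],k). Then the simplicial matroid Sim_k^n(S_k) is supersolvable if and only if it has no circuits, i.e., if and only if the vectors {∂_k F : F ∈ S_k} are linearly independent in 𝔽^{C([n],k−1)}. -/
/-!
Common definitions for simplicial matroids, following Cordovil–Lemos–Linhares Sales,
"Dirac's theorem on simplicial matroids".

We model `[n] = {1,…,n}` by `Fin n`, and a subset of `[n]` by a `Finset (Fin n)`.
A family `S_k ⊆ C([n],k)` is a `Finset (Finset (Fin n))` (all of whose members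
have cardinality `k`, which is imposed by hypotheses in the theorems).
-/

open Finset

section AuxSS
variable {𝔽 : Type*} [Field 𝔽] {n k : ℕ}

lemma inc_subset {F' F : Finset (Fin n)} (h : inc F' F ≠ 0) : F' ⊆ F := by
  by_contra hns
  apply h
  apply Finset.sum_eq_zero
  intro i hi
  rw [if_neg]
  intro he
  exact hns (he ▸ Finset.erase_subset i F)

lemma inc_erase {F : Finset (Fin n)} {i : Fin n} (hi : i ∈ F) :
    inc (F.erase i) F = (-1 : ℤ) ^ (F.filter (fun j => j ≤ i)).card := by
  unfold inc
  rw [Finset.sum_eq_single_of_mem i hi, if_pos rfl]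
  intro j hj hji
  rw [if_neg]
  intro he
  have : i ∈ F.erase j := Finset.mem_erase.2 ⟨fun h => hji h.symm, hi⟩
  rw [← he] at this
  exact (Finset.notMem_erase i F) this

lemma inc_erase_cast_ne {F : Finset (Fin n)} {i : Fin n}
    (hi : i ∈ F) : ((inc (F.erase i) F : ℤ) : 𝔽) ≠ 0 := by
  rw [inc_erase hi]
  push_cast
  exact pow_ne_zero _ (neg_ne_zero.2 one_ne_zero)

lemma bvec_ne_zero (hk : 0 < k) {F : Finset (Fin n)}
    (hF : F.card = k) : bvec 𝔽 n k F ≠ 0 := by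
  obtain ⟨i, hi⟩ := Finset.card_pos.1 (hF ▸ hk)
  intro h
  have hc : (F.erase i).card = k - 1 := by rw [Finset.card_erase_of_mem hi, hF]
  have := congrFun h ⟨F.erase i, hc⟩
  exact inc_erase_cast_ne hi this

lemma bvec_pair_indep (hk : 2 ≤ k) {e f : Finset (Fin n)} (he : e.card = k) (hf : f.card = k)
    (hef : e ≠ f) : LinearIndependent 𝔽 ![bvec 𝔽 n k e, bvec 𝔽 n k f] := by
  have key : ∀ (e f : Finset (Fin n)), e.card = k → f.card = k → e ≠ f →
      ∀ a b : 𝔽, a • bvec 𝔽 n k e + b • bvec 𝔽 n k f = 0 → a = 0 := by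
    intro e f he hf hef a b hab
    have hdiff : (e \ f).Nonempty := by
      rw [Finset.sdiff_nonempty]
      intro hsub
      exact hef (Finset.eq_of_subset_of_card_le hsub (le_of_eq (hf.trans he.symm)))
    obtain ⟨x, hx⟩ := hdiff
    have hxe : x ∈ e := (Finset.mem_sdiff.1 hx).1
    have hxf : x ∉ f := (Finset.mem_sdiff.1 hx).2
    have h2 : (e.erase x).Nonempty := by
      rw [← Finset.card_pos, Finset.card_erase_of_mem hxe, he]; omega
    obtain ⟨y, hy⟩ := h2
    have hyx : y ≠ x := Finset.ne_of_mem_erase hy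
    have hye : y ∈ e := Finset.mem_of_mem_erase hy
    have hc : (e.erase y).card = k - 1 := by rw [Finset.card_erase_of_mem hye, he]
    have hev := congrFun hab ⟨e.erase y, hc⟩
    simp only [Pi.add_apply, Pi.smul_apply, Pi.zero_apply, smul_eq_mul, bvec] at hev
    have hf0 : inc (e.erase y) f = 0 := by
      by_contra h0
      have hsub := inc_subset h0
      exact hxf (hsub (Finset.mem_erase.2 ⟨fun h => hyx h.symm, hxe⟩))
    rw [hf0] at hev
    simp at hev
    rcases hev with h | h
    · exact h
    · exact absurd h (inc_erase_cast_ne hye)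
  rw [LinearIndependent.pair_iff]
  intro a b hab
  refine ⟨key e f he hf hef a b hab, key f e hf he (Ne.symm hef) b a ?_⟩
  rw [← hab]; ring_nf

lemma two_facets_subset {g c : Finset (Fin n)} {i j : Fin n}
    (hij : i ≠ j) (h1 : g.erase i ⊆ c) (h2 : g.erase j ⊆ c) (hgc : g.card = c.card) :
    g = c := by
  have hsub : g ⊆ c := by
    intro x hx
    by_cases hxi : x = i
    · exact h2 (Finset.mem_erase.2 ⟨hxi ▸ hij, hx⟩)
    · exact h1 (Finset.mem_erase.2 ⟨hxi, hx⟩)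
  exact Finset.eq_of_subset_of_card_le hsub hgc.ge

lemma bvec_triple (hk : 3 ≤ k) {e f g : Finset (Fin n)} (he : e.card = k) (hf : f.card = k)
    (hg : g.card = k) (hge : g ≠ e) (hgf : g ≠ f) {a b : 𝔽}
    (hab : bvec 𝔽 n k g = a • bvec 𝔽 n k e + b • bvec 𝔽 n k f) : False := by
  have hclass : ∀ i ∈ g, g.erase i ⊆ e ∨ g.erase i ⊆ f := by
    intro i hi
    have hc : (g.erase i).card = k - 1 := by rw [Finset.card_erase_of_mem hi, hg]
    have hev := congrFun hab ⟨g.erase i, hc⟩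
    simp only [Pi.add_apply, Pi.smul_apply, smul_eq_mul, bvec] at hev
    by_contra hcon
    push_neg at hcon
    have h1 : inc (g.erase i) e = 0 := by
      by_contra h0; exact hcon.1 (inc_subset h0)
    have h2 : inc (g.erase i) f = 0 := by
      by_contra h0; exact hcon.2 (inc_subset h0)
    rw [h1, h2] at hev
    simp at hev
    exact inc_erase_cast_ne hi hev
  obtain ⟨t, hts, htc⟩ := Finset.exists_subset_card_eq (show 3 ≤ g.card by omega)
  obtain ⟨x, y, z, hxy, hxz, hyz, ht⟩ := Finset.card_eq_three.1 htc
  have hx : x ∈ g := hts (ht ▸ by simp)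
  have hy : y ∈ g := hts (ht ▸ by simp)
  have hz : z ∈ g := hts (ht ▸ by simp)
  have hcard_e : g.card = e.card := by rw [hg, he]
  have hcard_f : g.card = f.card := by rw [hg, hf]
  rcases hclass x hx with h1 | h1 <;> rcases hclass y hy with h2 | h2 <;>
    rcases hclass z hz with h3 | h3
  · exact hge (two_facets_subset hxy h1 h2 hcard_e)
  · exact hge (two_facets_subset hxy h1 h2 hcard_e)
  · exact hge (two_facets_subset hxz h1 h3 hcard_e)
  · exact hgf (two_facets_subset hyz h2 h3 hcard_f)
  · exact hge (two_facets_subset hyz h2 h3 hcard_e)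
  · exact hgf (two_facets_subset hxz h1 h3 hcard_f)
  · exact hgf (two_facets_subset hxy h1 h2 hcard_f)
  · exact hgf (two_facets_subset hxy h1 h2 hcard_f)

lemma simRank_empty : simRank 𝔽 n k (∅ : Finset (Finset (Fin n))) = 0 := by
  simp [simRank]

lemma simRank_mono {X Y : Finset (Finset (Fin n))} (h : X ⊆ Y) :
    simRank 𝔽 n k X ≤ simRank 𝔽 n k Y :=
  Submodule.finrank_mono (Submodule.span_mono (Set.image_mono (by exact_mod_cast h)))

lemma simClosure_empty (hk : 0 < k) (Sk : Finset (Finset (Fin n)))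
    (hSk : ∀ F ∈ Sk, F.card = k) : simClosure 𝔽 n k Sk ∅ = ∅ := by
  classical
  rw [Finset.eq_empty_iff_forall_notMem]
  intro F hF
  rw [simClosure, Finset.mem_filter] at hF
  obtain ⟨hFSk, hsp⟩ := hF
  simp only [Finset.coe_empty, Set.image_empty, Submodule.span_empty,
    Submodule.mem_bot] at hsp
  exact bvec_ne_zero hk (hSk F hFSk) hsp

lemma simRank_pos_nonempty {X : Finset (Finset (Fin n))} (h : 0 < simRank 𝔽 n k X) :
    X.Nonempty := by
  rcases X.eq_empty_or_nonempty with rfl | hne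
  · rw [simRank_empty] at h; omega
  · exact hne

/-- strict rank increase into a flat -/
lemma rank_lt_of_flat {Sk X Y : Finset (Finset (Fin n))} (hXf : SimFlat 𝔽 n k Sk X)
    (hXY : X ⊆ Y) (hYSk : Y ⊆ Sk) {F : Finset (Fin n)} (hFY : F ∈ Y) (hFX : F ∉ X) :
    simRank 𝔽 n k X < simRank 𝔽 n k Y := by
  by_contra hle
  push_neg at hle
  have hle' : Submodule.span 𝔽 ((fun G => bvec 𝔽 n k G) '' (X : Set (Finset (Fin n)))) ≤
      Submodule.span 𝔽 ((fun G => bvec 𝔽 n k G) '' (Y : Set (Finset (Fin n)))) :=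
    Submodule.span_mono (Set.image_mono (by exact_mod_cast hXY))
  have heq := Submodule.eq_of_le_of_finrank_le hle' hle
  have hmem : bvec 𝔽 n k F ∈
      Submodule.span 𝔽 ((fun G => bvec 𝔽 n k G) '' (Y : Set (Finset (Fin n)))) :=
    Submodule.subset_span ⟨F, by exact_mod_cast hFY, rfl⟩
  rw [← heq] at hmem
  exact hFX (hXf.2 F (hYSk hFY) hmem)

end AuxSS

section AuxSS2
variable {𝔽 : Type*} [Field 𝔽] {n k : ℕ}

lemma range_eq_image (X : Finset (Finset (Fin n))) :
    Set.range (fun F : ↥X => bvec 𝔽 n k F.1) =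
      (fun F => bvec 𝔽 n k F) '' (X : Set (Finset (Fin n))) := by
  ext v
  constructor
  · rintro ⟨F, rfl⟩
    exact ⟨F.1, F.2, rfl⟩
  · rintro ⟨G, hG, rfl⟩
    exact ⟨⟨G, hG⟩, rfl⟩

lemma indep_iff_card (X : Finset (Finset (Fin n))) :
    LinearIndependent 𝔽 (fun F : X => bvec 𝔽 n k F.1) ↔ X.card = simRank 𝔽 n k X := by
  rw [linearIndependent_iff_card_eq_finrank_span, Fintype.card_coe]
  unfold Set.finrank simRank
  rw [range_eq_image]

lemma indep_subfamily {Sk X : Finset (Finset (Fin n))} (hXS : X ⊆ Sk)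
    (hli : LinearIndependent 𝔽 (fun F : Sk => bvec 𝔽 n k F.1)) :
    LinearIndependent 𝔽 (fun F : X => bvec 𝔽 n k F.1) := by
  have h2 := hli.comp (fun F : ↥X => (⟨F.1, hXS F.2⟩ : ↥Sk))
    (fun a b hab => by have h := congrArg Subtype.val hab; exact Subtype.ext h)
  exact h2

lemma rank_eq_card_of_indep {Sk X : Finset (Finset (Fin n))} (hXS : X ⊆ Sk)
    (hli : LinearIndependent 𝔽 (fun F : Sk => bvec 𝔽 n k F.1)) :
    simRank 𝔽 n k X = X.card :=
  ((indep_iff_card X).1 (indep_subfamily hXS hli)).symm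

lemma flat_of_indep {Sk X : Finset (Finset (Fin n))} (hXS : X ⊆ Sk)
    (hli : LinearIndependent 𝔽 (fun F : Sk => bvec 𝔽 n k F.1)) :
    SimFlat 𝔽 n k Sk X := by
  refine ⟨hXS, fun F hF hmem => ?_⟩
  by_contra hFX
  have himg : (fun G => bvec 𝔽 n k G) '' (X : Set (Finset (Fin n))) =
      (fun F : ↥Sk => bvec 𝔽 n k F.1) '' {G : ↥Sk | G.1 ∈ X} := by
    ext v
    constructor
    · rintro ⟨G, hG, rfl⟩
      exact ⟨⟨G, hXS hG⟩, hG, rfl⟩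
    · rintro ⟨G, hG, rfl⟩
      exact ⟨G.1, hG, rfl⟩
  rw [himg] at hmem
  exact hli.notMem_span_image (s := {G : ↥Sk | G.1 ∈ X}) (x := ⟨F, hF⟩) hFX hmem

lemma modular_of_indep {Sk X : Finset (Finset (Fin n))} (hXS : X ⊆ Sk)
    (hli : LinearIndependent 𝔽 (fun F : Sk => bvec 𝔽 n k F.1)) :
    ModularFlat 𝔽 n k Sk X := by
  classical
  refine ⟨flat_of_indep hXS hli, fun Y hY => ?_⟩
  rw [rank_eq_card_of_indep hXS hli, rank_eq_card_of_indep hY.1 hli,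
    rank_eq_card_of_indep (Finset.union_subset hXS hY.1) hli,
    rank_eq_card_of_indep ((Finset.inter_subset_left).trans hXS) hli]
  exact (Finset.card_union_add_card_inter X Y).symm

end AuxSS2

section AuxSS3
variable {𝔽 : Type*} [Field 𝔽] {n k : ℕ}

lemma noCirc_iff (Sk : Finset (Finset (Fin n))) :
    (∀ C, ¬ SimCircuit 𝔽 n k Sk C) ↔
      LinearIndependent 𝔽 (fun F : Sk => bvec 𝔽 n k F.1) := by
  classical
  constructor
  · intro h
    by_contra hdep
    set T := Sk.powerset.filter
      (fun C : Finset (Finset (Fin n)) =>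
        ¬ LinearIndependent 𝔽 (fun F : ↥C => bvec 𝔽 n k F.1)) with hT
    have hne : T.Nonempty := ⟨Sk, by
      rw [hT, Finset.mem_filter, Finset.mem_powerset]; exact ⟨le_rfl, hdep⟩⟩
    obtain ⟨C, hC, hmin⟩ := T.exists_min_image Finset.card hne
    rw [hT, Finset.mem_filter, Finset.mem_powerset] at hC
    apply h C
    refine ⟨hC.1, hC.2, fun C' hC' => ?_⟩
    by_contra hC'dep
    have hlt : C'.card < C.card := Finset.card_lt_card hC'
    have hC'T : C' ∈ T := by
      rw [hT, Finset.mem_filter, Finset.mem_powerset]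
      exact ⟨hC'.subset.trans hC.1, hC'dep⟩
    exact absurd (hmin C' hC'T) (not_le.2 hlt)
  · intro hli C hC
    exact hC.2.1 (indep_subfamily hC.1 hli)

lemma indep_to_ss (hk : 0 < k) {Sk : Finset (Finset (Fin n))}
    (hSk : ∀ F ∈ Sk, F.card = k)
    (hli : LinearIndependent 𝔽 (fun F : Sk => bvec 𝔽 n k F.1)) :
    Supersolvable 𝔽 n k Sk := by
  classical
  have hcard : Sk.card = simRank 𝔽 n k Sk := (indep_iff_card Sk).1 hli
  set l := Sk.toList with hl
  have hlen : l.length = Sk.card := Finset.length_toList Sk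
  have hnd : l.Nodup := Finset.nodup_toList Sk
  have hsub : ∀ i, (l.take i).toFinset ⊆ Sk := by
    intro i F hF
    rw [List.mem_toFinset] at hF
    exact (Finset.mem_toList).1 (List.mem_of_mem_take hF)
  have hcards : ∀ i, i ≤ l.length → ((l.take i).toFinset).card = i := by
    intro i hi
    rw [List.toFinset_card_of_nodup (hnd.sublist (List.take_sublist i l))]
    rw [List.length_take]; omega
  refine ⟨fun i => (l.take i).toFinset, ?_, ?_, ?_, ?_⟩
  · rw [simClosure_empty hk Sk hSk]; simp
  · show (l.take (simRank 𝔽 n k Sk)).toFinset = Sk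
    rw [← hcard, ← hlen, List.take_length, Finset.toList_toFinset]
  · intro i hi
    have hil : i < l.length := by omega
    have hsub2 : (l.take i).toFinset ⊆ (l.take (i+1)).toFinset := by
      intro F hF
      rw [List.mem_toFinset] at hF ⊢
      have : l.take i = (l.take (i+1)).take i := by
        rw [List.take_take]; congr 1; omega
      rw [this] at hF
      exact List.mem_of_mem_take hF
    refine Finset.ssubset_iff_subset_ne.2 ⟨hsub2, fun he => ?_⟩
    simp only at he
    have h1 := hcards i (by omega)
    have h2 := hcards (i+1) (by omega)
    rw [he, h2] at h1
    omega
  · intro i _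
    exact modular_of_indep (hsub i) hli

end AuxSS3

section AuxSS4
variable {𝔽 : Type*} [Field 𝔽] {n k : ℕ}

lemma ss_to_indep (hk : 2 < k) {Sk : Finset (Finset (Fin n))}
    (hSk : ∀ F ∈ Sk, F.card = k) (hss : Supersolvable 𝔽 n k Sk) :
    LinearIndependent 𝔽 (fun F : Sk => bvec 𝔽 n k F.1) := by
  classical
  obtain ⟨X, h0, hr, hstrict, hmod⟩ := hss
  have hflat : ∀ i ≤ simRank 𝔽 n k Sk, SimFlat 𝔽 n k Sk (X i) := fun i hi => (hmod i hi).1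
  have hsub : ∀ i ≤ simRank 𝔽 n k Sk, X i ⊆ Sk := fun i hi => (hflat i hi).1
  have hX0 : X 0 = ∅ := by rw [h0, simClosure_empty (by omega) Sk hSk]
  have hchain : ∀ i < simRank 𝔽 n k Sk, X i ⊆ X (i + 1) := fun i hi => (hstrict i hi).subset
  have hstep : ∀ i < simRank 𝔽 n k Sk, simRank 𝔽 n k (X i) < simRank 𝔽 n k (X (i + 1)) := by
    intro i hi
    obtain ⟨F, hF1, hF2⟩ := Finset.exists_of_ssubset (hstrict i hi)
    exact rank_lt_of_flat (hflat i hi.le) (hchain i hi) (hsub (i + 1) hi) hF1 hF2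
  have hranklow : ∀ i ≤ simRank 𝔽 n k Sk, i ≤ simRank 𝔽 n k (X i) := by
    intro i
    induction i with
    | zero => intro _; exact Nat.zero_le _
    | succ m ih =>
      intro hm
      have h1 := ih (by omega)
      have h2 := hstep m (by omega)
      omega
  have hrankhigh : ∀ d i, i + d = simRank 𝔽 n k Sk → simRank 𝔽 n k (X i) ≤ i := by
    intro d
    induction d with
    | zero =>
      intro i hi
      have : i = simRank 𝔽 n k Sk := by omega
      rw [this, hr]
    | succ d ih =>
      intro i hi
      have h1 := hstep i (by omega)
      have h2 := ih (i + 1) (by omega)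
      omega
  have hrank : ∀ i ≤ simRank 𝔽 n k Sk, simRank 𝔽 n k (X i) = i := fun i hi =>
    le_antisymm (hrankhigh (simRank 𝔽 n k Sk - i) i (by omega)) (hranklow i hi)
  have honestep : ∀ i < simRank 𝔽 n k Sk, (X (i + 1) \ X i).card = 1 := by
    intro i hi
    have hnonempty : 0 < (X (i + 1) \ X i).card := by
      obtain ⟨F, hF1, hF2⟩ := Finset.exists_of_ssubset (hstrict i hi)
      exact Finset.card_pos.2 ⟨F, Finset.mem_sdiff.2 ⟨hF1, hF2⟩⟩
    by_contra hne
    have h2 : 1 < (X (i + 1) \ X i).card := by omega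
    obtain ⟨e, he, f, hf, hef⟩ := Finset.one_lt_card.1 h2
    rw [Finset.mem_sdiff] at he hf
    obtain ⟨he1, he2⟩ := he
    obtain ⟨hf1, hf2⟩ := hf
    have heS : e ∈ Sk := hsub (i + 1) hi he1
    have hfS : f ∈ Sk := hsub (i + 1) hi hf1
    have himgef : (fun G => bvec 𝔽 n k G) '' (({e, f} : Finset (Finset (Fin n))) :
        Set (Finset (Fin n))) = {bvec 𝔽 n k e, bvec 𝔽 n k f} := by
      rw [Finset.coe_insert, Finset.coe_singleton, Set.image_insert_eq, Set.image_singleton]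
    have heY : e ∈ simClosure 𝔽 n k Sk {e, f} := by
      rw [simClosure, Finset.mem_filter]
      exact ⟨heS, by rw [himgef]; exact Submodule.subset_span (Set.mem_insert _ _)⟩
    have hfY : f ∈ simClosure 𝔽 n k Sk {e, f} := by
      rw [simClosure, Finset.mem_filter]
      refine ⟨hfS, ?_⟩
      rw [himgef]
      exact Submodule.subset_span (Set.mem_insert_of_mem _ rfl)
    have hYspan : Submodule.span 𝔽 ((fun G => bvec 𝔽 n k G) ''
          ((simClosure 𝔽 n k Sk {e, f} : Finset (Finset (Fin n))) : Set (Finset (Fin n)))) =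
        Submodule.span 𝔽 {bvec 𝔽 n k e, bvec 𝔽 n k f} := by
      apply le_antisymm
      · rw [Submodule.span_le]
        rintro v ⟨G, hG, rfl⟩
        have hG' : G ∈ simClosure 𝔽 n k Sk {e, f} := hG
        rw [simClosure, Finset.mem_filter] at hG'
        have := hG'.2
        rwa [himgef] at this
      · rw [Submodule.span_le]
        intro v hv
        rcases Set.mem_insert_iff.1 hv with rfl | hv
        · exact Submodule.subset_span ⟨e, heY, rfl⟩
        · rw [Set.mem_singleton_iff] at hv
          subst hv
          exact Submodule.subset_span ⟨f, hfY, rfl⟩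
    have hYflat : SimFlat 𝔽 n k Sk (simClosure 𝔽 n k Sk {e, f}) := by
      refine ⟨Finset.filter_subset _ _, fun F hF hm => ?_⟩
      rw [simClosure, Finset.mem_filter]
      rw [hYspan, ← Submodule.span_eq (Submodule.span 𝔽 _), ← himgef] at hm
      refine ⟨hF, by rwa [Submodule.span_eq] at hm⟩
    have hYsub : simClosure 𝔽 n k Sk {e, f} ⊆ X (i + 1) := by
      intro F hF
      rw [simClosure, Finset.mem_filter] at hF
      obtain ⟨hFS, hm⟩ := hF
      rw [himgef] at hm
      have hle : Submodule.span 𝔽 {bvec 𝔽 n k e, bvec 𝔽 n k f} ≤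
          Submodule.span 𝔽 ((fun G => bvec 𝔽 n k G) ''
            ((X (i + 1) : Finset (Finset (Fin n))) : Set (Finset (Fin n)))) := by
        rw [Submodule.span_le]
        intro v hv
        rcases Set.mem_insert_iff.1 hv with rfl | hv
        · exact Submodule.subset_span ⟨e, he1, rfl⟩
        · rw [Set.mem_singleton_iff] at hv
          subst hv
          exact Submodule.subset_span ⟨f, hf1, rfl⟩
      exact (hflat (i + 1) hi).2 F hFS (hle hm)
    have hY2 : simRank 𝔽 n k (simClosure 𝔽 n k Sk {e, f}) = 2 := by
      have hpair := bvec_pair_indep (𝔽 := 𝔽) (by omega) (hSk e heS) (hSk f hfS) hef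
      have hrange : Set.range ![bvec 𝔽 n k e, bvec 𝔽 n k f] =
          {bvec 𝔽 n k e, bvec 𝔽 n k f} := by
        simp only [Matrix.range_cons, Matrix.range_empty, Set.union_empty,
          Set.union_singleton]
        exact Set.pair_comm _ _
      have hfr := finrank_span_eq_card hpair
      rw [hrange] at hfr
      rw [simRank, hYspan, hfr]
      simp
    have hmodeq := (hmod i hi.le).2 _ hYflat
    have hXiY : simRank 𝔽 n k (X i ∪ simClosure 𝔽 n k Sk {e, f}) ≤ i + 1 :=
      le_trans (simRank_mono (Finset.union_subset (hchain i hi) hYsub))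
        (le_of_eq (hrank (i + 1) hi))
    have hXi : simRank 𝔽 n k (X i) = i := hrank i hi.le
    have hint : 1 ≤ simRank 𝔽 n k (X i ∩ simClosure 𝔽 n k Sk {e, f}) := by omega
    obtain ⟨g, hg⟩ := simRank_pos_nonempty hint
    rw [Finset.mem_inter] at hg
    obtain ⟨hgXi, hgY⟩ := hg
    rw [simClosure, Finset.mem_filter] at hgY
    obtain ⟨hgS, hgm⟩ := hgY
    have hge : g ≠ e := fun h => he2 (h ▸ hgXi)
    have hgf : g ≠ f := fun h => hf2 (h ▸ hgXi)
    rw [himgef, Submodule.mem_span_pair] at hgm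
    obtain ⟨a, b, hab⟩ := hgm
    exact bvec_triple hk (hSk e heS) (hSk f hfS) (hSk g hgS) hge hgf hab.symm
  have hcards : ∀ i ≤ simRank 𝔽 n k Sk, (X i).card = i := by
    intro i
    induction i with
    | zero => intro _; rw [hX0]; rfl
    | succ m ih =>
      intro hm
      have h1 := Finset.card_sdiff_add_card_eq_card (hchain m (by omega))
      rw [honestep m (by omega), ih (by omega)] at h1
      omega
  have hfin : Sk.card = simRank 𝔽 n k Sk := by
    conv_lhs => rw [← hr]
    exact hcards _ le_rfl
  exact (indep_iff_card Sk).2 hfin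

end AuxSS4



theorem stmt8 (𝔽 : Type*) [Field 𝔽] (n k : ℕ) (hk : 2 < k) (hkn : k ≤ n)
    (Sk : Finset (Finset (Fin n))) (hSk : ∀ F ∈ Sk, F.card = k) :
    (Supersolvable 𝔽 n k Sk ↔ ∀ C, ¬ SimCircuit 𝔽 n k Sk C) ∧
    (Supersolvable 𝔽 n k Sk ↔ LinearIndependent 𝔽 (fun F : Sk => bvec 𝔽 n k F.1)) := by
  have hiff : Supersolvable 𝔽 n k Sk ↔
      LinearIndependent 𝔽 (fun F : Sk => bvec 𝔽 n k F.1) :=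
    ⟨fun h => ss_to_indep hk hSk h, fun h => indep_to_ss (by omega) hSk h⟩
  exact ⟨hiff.trans (noCirc_iff Sk).symm, hiff⟩
end
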